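/- Let b > 0, β > 0, c real, k > 0 real, and set a = 4bβ − βc²/(4b²) + (c/b − 2/β − βc²/(4b²))k. Assume −16b³k + 4b²βc(3+5k) + bβ²(32b³ − 8c²(1+k)) + cβ³(c²(1+k) − 8b³) = 0. Then u(r) = r^{(k−1)/2}(1 + (c/(2b)) r + ((βc − 2b)/(2bβ²)) r²) exp(−(c/(2b)) r − (b/2) r²) solves −u'' + [(k−1)(k−3)/(4r²) + a/(r+β) + c r + b² r²] u = (b(k+4) − c²/(4b²)) u on (0,∞). -/

import Mathlib

theorem stmt_9 (b β c k a : ℝ) (hb : 0 < b) (hβ : 0 < β) (hk : 0 < k)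
    (ha : a = 4 * b * β - β * c ^ 2 / (4 * b ^ 2) +
      (c / b - 2 / β - β * c ^ 2 / (4 * b ^ 2)) * k)
    (hroot : -16 * b ^ 3 * k + 4 * b ^ 2 * β * c * (3 + 5 * k) +
        b * β ^ 2 * (32 * b ^ 3 - 8 * c ^ 2 * (1 + k)) +
        c * β ^ 3 * (c ^ 2 * (1 + k) - 8 * b ^ 3) = 0)
    (u : ℝ → ℝ)
    (hu : u = fun r : ℝ =>
      r ^ ((k - 1) / 2) *
        (1 + (c / (2 * b)) * r + ((β * c - 2 * b) / (2 * b * β ^ 2)) * r ^ 2) *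
        Real.exp (-(c / (2 * b)) * r - (b / 2) * r ^ 2)) :
    ∀ r ∈ Set.Ioi (0 : ℝ),
      -(deriv (deriv u) r) +
        ((k - 1) * (k - 3) / (4 * r ^ 2) + a / (r + β) + c * r + b ^ 2 * r ^ 2) * u r
        = (b * (k + 4) - c ^ 2 / (4 * b ^ 2)) * u r := by
  set c1 : ℝ := c / (2 * b) with hc1
  set d : ℝ := (β * c - 2 * b) / (2 * b * β ^ 2) with hd
  set p : ℝ := (k - 1) / 2 with hp
  set X : ℝ → ℝ := fun r => Real.exp (-(c / (2 * b)) * r - (b / 2) * r ^ 2) with hX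
  set g : ℝ → ℝ := fun r => (1 + c1 * r + d * r ^ 2) * X r with hgdef
  set g1 : ℝ → ℝ := fun r =>
    ((c1 + 2 * d * r) + (1 + c1 * r + d * r ^ 2) * (-(c / (2 * b)) - b * r)) * X r with hg1def
  set g2 : ℝ → ℝ := fun r =>
    (2 * d + 2 * (c1 + 2 * d * r) * (-(c / (2 * b)) - b * r)
      + (1 + c1 * r + d * r ^ 2) * (-b)
      + (1 + c1 * r + d * r ^ 2) * (-(c / (2 * b)) - b * r) ^ 2) * X r with hg2def
  have hQ : ∀ r : ℝ, HasDerivAt (fun r : ℝ => -(c / (2 * b)) * r - (b / 2) * r ^ 2)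
      (-(c / (2 * b)) - b * r) r := by
    intro r
    have h1 : HasDerivAt (fun r : ℝ => -(c / (2 * b)) * r) (-(c / (2 * b))) r := by
      simpa using (hasDerivAt_id r).const_mul (-(c / (2 * b)))
    have h2 : HasDerivAt (fun r : ℝ => (b / 2) * r ^ 2) (b * r) r := by
      have := (hasDerivAt_pow 2 r).const_mul (b / 2)
      refine this.congr_deriv ?_
      simp; ring
    exact h1.sub h2
  have hXd : ∀ r : ℝ, HasDerivAt X ((-(c / (2 * b)) - b * r) * X r) r := by
    intro r
    have := (hQ r).exp
    simpa [hX, mul_comm] using this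
  have hPd : ∀ r : ℝ, HasDerivAt (fun r : ℝ => 1 + c1 * r + d * r ^ 2) (c1 + 2 * d * r) r := by
    intro r
    have h1 : HasDerivAt (fun r : ℝ => c1 * r) c1 r := by
      simpa using (hasDerivAt_id r).const_mul c1
    have h2 : HasDerivAt (fun r : ℝ => d * r ^ 2) (2 * d * r) r := by
      have := (hasDerivAt_pow 2 r).const_mul d
      refine this.congr_deriv ?_
      simp; ring
    exact (((hasDerivAt_const r (1:ℝ)).add h1).add h2).congr_deriv (by ring)
  have hg : ∀ r : ℝ, HasDerivAt g (g1 r) r := by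
    intro r
    have := (hPd r).mul (hXd r)
    refine this.congr_deriv ?_
    simp only [hg1def]; ring
  have hg1 : ∀ r : ℝ, HasDerivAt g1 (g2 r) r := by
    intro r
    have hS : HasDerivAt (fun r : ℝ =>
        (c1 + 2 * d * r) + (1 + c1 * r + d * r ^ 2) * (-(c / (2 * b)) - b * r))
        ((2 * d) + ((c1 + 2 * d * r) * (-(c / (2 * b)) - b * r)
          + (1 + c1 * r + d * r ^ 2) * (-b))) r := by
      have h1 : HasDerivAt (fun r : ℝ => c1 + 2 * d * r) (2 * d) r := by
        exact ((hasDerivAt_const r c1).add ((hasDerivAt_id r).const_mul (2 * d))).congr_deriv (by ring)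
      have h2 : HasDerivAt (fun r : ℝ => -(c / (2 * b)) - b * r) (-b) r := by
        exact ((hasDerivAt_const r (-(c / (2 * b)))).sub ((hasDerivAt_id r).const_mul b)).congr_deriv (by ring)
      exact h1.add ((hPd r).mul h2)
    have := hS.mul (hXd r)
    refine this.congr_deriv ?_
    simp only [hg2def]; ring
  have hu2 : u = fun r : ℝ => r ^ p * g r := by
    rw [hu]; funext x; simp only [hgdef, hX]; ring
  intro r hr
  have hr0 : (0:ℝ) < r := hr
  have hrne : r ≠ 0 := ne_of_gt hr0
  have hrβ : r + β ≠ 0 := by positivity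
  have hXne : X r ≠ 0 := Real.exp_ne_zero _
  set w1 : ℝ → ℝ := fun r => r ^ (p - 1) * (p * g r + r * g1 r) with hw1def
  have hud : ∀ s ∈ Set.Ioi (0:ℝ), HasDerivAt u (w1 s) s := by
    intro s hs
    have hs0 : (0:ℝ) < s := hs
    have hsne : s ≠ 0 := ne_of_gt hs0
    have hrp : HasDerivAt (fun x : ℝ => x ^ p) (p * s ^ (p - 1)) s :=
      Real.hasDerivAt_rpow_const (Or.inl hsne)
    have := hrp.mul (hg s)
    rw [hu2]
    refine this.congr_deriv ?_
    have hpow : s ^ p = s ^ (p - 1) * s := by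
      rw [← Real.rpow_add_one hsne]; ring_nf
    rw [hw1def]; simp only []
    rw [hpow]; ring
  have hderiv1 : Set.EqOn (deriv u) w1 (Set.Ioi 0) := fun s hs => (hud s hs).deriv
  have hev : deriv u =ᶠ[nhds r] w1 :=
    Filter.eventuallyEq_of_mem (Ioi_mem_nhds hr0) hderiv1
  have hw1d : HasDerivAt w1
      (r ^ (p - 2) * (p * (p - 1) * g r + 2 * p * r * g1 r + r ^ 2 * g2 r)) r := by
    have hrp : HasDerivAt (fun x : ℝ => x ^ (p - 1)) ((p - 1) * r ^ (p - 1 - 1)) r :=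
      Real.hasDerivAt_rpow_const (Or.inl hrne)
    have hin : HasDerivAt (fun s : ℝ => p * g s + s * g1 s)
        (p * g1 r + (1 * g1 r + r * g2 r)) r :=
      ((hg r).const_mul p).add ((hasDerivAt_id r).mul (hg1 r))
    have := hrp.mul hin
    refine this.congr_deriv ?_
    have hpow : r ^ (p - 1) = r ^ (p - 2) * r := by
      rw [← Real.rpow_add_one hrne]; ring_nf
    have hpow2 : r ^ (p - 1 - 1) = r ^ (p - 2) := by congr 1; ring
    rw [hpow, hpow2]; ring
  have hdd : deriv (deriv u) r
      = r ^ (p - 2) * (p * (p - 1) * g r + 2 * p * r * g1 r + r ^ 2 * g2 r) := by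
    rw [hev.deriv_eq]; exact hw1d.deriv
  have hpow3 : r ^ p = r ^ (p - 2) * r ^ 2 := by
    have h := Real.rpow_add hr0 (p - 2) 2
    rw [show p - 2 + 2 = p by ring] at h
    rw [h, Real.rpow_two]
  have hbne : b ≠ 0 := ne_of_gt hb
  have hβne : β ≠ 0 := ne_of_gt hβ
  have key : -(p * (p - 1) * g r + 2 * p * r * g1 r + r ^ 2 * g2 r)
      + ((k - 1) * (k - 3) / (4 * r ^ 2) + a / (r + β) + c * r + b ^ 2 * r ^ 2)
        * (r ^ 2 * g r)
      = (b * (k + 4) - c ^ 2 / (4 * b ^ 2)) * (r ^ 2 * g r) := by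
    subst ha
    simp only [hgdef, hg1def, hg2def, hc1, hd, hp]
    field_simp
    linear_combination (-(4:ℝ) * r ^ 3 * (r + β)) * hroot
  rw [hdd, hu2]
  simp only []
  rw [hpow3]
  linear_combination (r ^ (p - 2)) * key
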